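/- Let 𝐂 be a locally cartesian closed category with finite products and X an object of 𝐂. If p : A → B is orthogonal to X, then the diagonal morphism δ_p : A → A ×_B A (the unique morphism into the pullback of p along itself whose compositions with both projections are the identity on A) is orthogonal to X. -/

import Mathlib

open CategoryTheory CategoryTheory.Limits MonoidalCategory

universe v u

/-- In a category with (chosen) finite products, a morphism `p : A ⟶ B` is
*orthogonal* to an object `X` if every commuting square whose left edge is a
projection `Y ⊗ X ⟶ Y` and whose right edge is `p` has a unique diagonal filler. -/
def OrthogonalTo {𝒞 : Type u} [Category.{v} 𝒞] [CartesianMonoidalCategory 𝒞]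
    {A B : 𝒞} (p : A ⟶ B) (X : 𝒞) : Prop :=
  ∀ (Y : 𝒞) (f : Y ⊗ X ⟶ A) (g : Y ⟶ B),
    f ≫ p = CartesianMonoidalCategory.fst Y X ≫ g →
      ∃! h : Y ⟶ A, CartesianMonoidalCategory.fst Y X ≫ h = f ∧ h ≫ p = g

/-- In a locally cartesian closed category with finite products, if `p : A ⟶ B` is
orthogonal to `X` then so is the diagonal morphism `A ⟶ A ×_B A`. -/
theorem statement_14 {𝒞 : Type u} [Category.{v} 𝒞] [CartesianMonoidalCategory 𝒞]
    [HasPullbacks 𝒞]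
    (lcc : ∀ {Y Z : 𝒞} (g : Y ⟶ Z), (Over.pullback g).IsLeftAdjoint)
    {A B : 𝒞} (p : A ⟶ B) (X : 𝒞) (hp : OrthogonalTo p X) :
    OrthogonalTo (pullback.diagonal p) X := by
  intro Y f g hfg
  have hf1 : CartesianMonoidalCategory.fst Y X ≫ g ≫ pullback.fst p p = f := by
    rw [← Category.assoc, ← hfg, Category.assoc, pullback.diagonal_fst, Category.comp_id]
  have hf2 : CartesianMonoidalCategory.fst Y X ≫ g ≫ pullback.snd p p = f := by
    rw [← Category.assoc, ← hfg, Category.assoc, pullback.diagonal_snd, Category.comp_id]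
  have key : g ≫ pullback.fst p p = g ≫ pullback.snd p p := by
    obtain ⟨h, -, huniq⟩ := hp Y f (g ≫ pullback.fst p p ≫ p)
      (by rw [← hf1]; simp)
    have e1 := huniq (g ≫ pullback.fst p p) ⟨hf1, by simp⟩
    have e2 := huniq (g ≫ pullback.snd p p)
      ⟨hf2, by rw [Category.assoc, ← pullback.condition]⟩
    rw [e1, e2]
  refine ⟨g ≫ pullback.fst p p, ⟨hf1, ?_⟩, ?_⟩
  · apply pullback.hom_ext <;> simp [key]
  · rintro h ⟨-, hh2⟩
    rw [← hh2]; simp
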